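/- Let π : ℝ → ℝ/ℤ be the quotient map onto the circle ℝ/ℤ (with the quotient topology), and let d be the set of paths p : I → ℝ/ℤ of the form p = π ∘ q for some continuous non-decreasing map q : I → ℝ. Then (ℝ/ℤ, d) is a d-space (the directed circle), and it is saturated: every weakly directed path of (ℝ/ℤ, d) belongs to d. -/
import Mathlib


open unitInterval Topology Set

/-- Concatenation of two continuous paths `p q : C(I, X)` with `p 1 = q 0`,
traversing `p` on `[0, 1/2]` and `q` on `[1/2, 1]` (both at double speed). -/
noncomputable def concatPath {X : Type*} [TopologicalSpace X]
    (p q : C(unitInterval, X)) (h : p 1 = q 0) : C(unitInterval, X) :=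
  ((⟨p, rfl, rfl⟩ : Path (p 0) (p 1)).trans
    ((⟨q, rfl, rfl⟩ : Path (q 0) (q 1)).cast h rfl)).toContinuousMap

/-- A d-space structure on a topological space `X`: a set of continuous paths
`I → X` containing the constant paths, closed under concatenation and under
precomposition with continuous non-decreasing maps `I → I`. -/
structure DSpace (X : Type*) [TopologicalSpace X] where
  d : Set C(unitInterval, X)
  const_mem : ∀ x : X, ContinuousMap.const unitInterval x ∈ d
  concat_mem : ∀ p ∈ d, ∀ q ∈ d, ∀ h : p 1 = q 0, concatPath p q h ∈ d
  reparam_mem : ∀ p ∈ d, ∀ φ : C(unitInterval, unitInterval), Monotone ⇑φ → p.comp φ ∈ d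

/-- `c` is a directed function on the (open) set `U` for the set of directed
paths `d`: it is continuous on `U` and non-decreasing along every directed path
with image contained in `U`. -/
def IsDirectedFn {X : Type*} [TopologicalSpace X] (d : Set C(unitInterval, X))
    (U : Set X) (c : X → unitInterval) : Prop :=
  ContinuousOn c U ∧ ∀ p ∈ d, Set.range ⇑p ⊆ U → Monotone (c ∘ ⇑p)

/-- A path `p` is weakly directed when, for every directed function `c` on an
open `U`, the map `c ∘ p` is locally non-decreasing on `p ⁻¹' U`. -/
def IsWeaklyDirected {X : Type*} [TopologicalSpace X] (d : Set C(unitInterval, X))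
    (p : C(unitInterval, X)) : Prop :=
  ∀ U : Set X, IsOpen U → ∀ c : X → unitInterval, IsDirectedFn d U c →
    ∀ t : unitInterval, p t ∈ U →
      ∃ V ∈ 𝓝 t, V ⊆ ⇑p ⁻¹' U ∧ MonotoneOn (c ∘ ⇑p) V

/-- The set `d̂X` of weakly directed paths. -/
def satPaths {X : Type*} [TopologicalSpace X] (d : Set C(unitInterval, X)) :
    Set C(unitInterval, X) :=
  {p | IsWeaklyDirected d p}

/-- A set of directed paths is saturated when every weakly directed path is directed. -/
def IsSaturated {X : Type*} [TopologicalSpace X] (d : Set C(unitInterval, X)) : Prop :=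
  satPaths d = d

/-- The directed circle: paths in `ℝ/ℤ` of the form `π ∘ q` for some continuous
non-decreasing `q : I → ℝ`, where `π : ℝ → ℝ/ℤ` is the quotient map. -/
def dCircle : Set C(unitInterval, AddCircle (1 : ℝ)) :=
  {p | ∃ q : unitInterval → ℝ, Continuous q ∧ Monotone q ∧
    ∀ t, p t = (q t : AddCircle (1 : ℝ))}

namespace DCircleAux

noncomputable section

lemma coe_eq_coe_iff {x y : ℝ} :
    (x : AddCircle (1:ℝ)) = (y : ℝ) ↔ ∃ k : ℤ, x - y = (k : ℝ) := by
  rw [QuotientAddGroup.eq_iff_sub_mem]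
  constructor
  · rintro ⟨k, hk⟩; exact ⟨k, by simpa [zsmul_eq_mul] using hk.symm⟩
  · rintro ⟨k, hk⟩; exact ⟨k, by simp [zsmul_eq_mul, hk]⟩

lemma equivIco_val_coe {a x : ℝ} (hx : x ∈ Ico a (a + 1)) :
    ((AddCircle.equivIco 1 a (x : AddCircle (1:ℝ)) : Ico a (a+1)) : ℝ) = x := by
  have h : AddCircle.equivIco 1 a ((x : ℝ) : AddCircle (1:ℝ)) = ⟨x, hx⟩ := by
    rw [Equiv.apply_eq_iff_eq_symm_apply]; rfl
  rw [h]

lemma coe_equivIco_val (a : ℝ) (y : AddCircle (1:ℝ)) :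
    (((AddCircle.equivIco 1 a y : Ico a (a+1)) : ℝ) : AddCircle (1:ℝ)) = y :=
  (AddCircle.equivIco 1 a).symm_apply_apply y

/-- The "angle coordinate" based at `a`, valued in `I`. -/
def arcFn (a : ℝ) (y : AddCircle (1:ℝ)) : unitInterval :=
  Set.projIcc 0 1 zero_le_one ((AddCircle.equivIco 1 a y : ℝ) - a)

lemma ne_coe_of_mem_Ioo {a x : ℝ} (hx : x ∈ Ioo a (a+1)) :
    (x : AddCircle (1:ℝ)) ≠ (a : ℝ) := by
  intro h
  obtain ⟨k, hk⟩ := coe_eq_coe_iff.mp h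
  have h0 : (0:ℝ) < k := by rw [← hk]; linarith [hx.1]
  have h1 : (k:ℝ) < 1 := by rw [← hk]; linarith [hx.2]
  have h0' : (0:ℤ) < k := by exact_mod_cast h0
  have h1' : k < (1:ℤ) := by exact_mod_cast h1
  omega

lemma arcFn_coe {a x : ℝ} (hx : x ∈ Ioo a (a+1)) :
    ((arcFn a (x : ℝ) : unitInterval) : ℝ) = x - a := by
  rw [arcFn, equivIco_val_coe (Ioo_subset_Ico_self hx),
    projIcc_of_mem zero_le_one ⟨by linarith [hx.1], by linarith [hx.2]⟩]

lemma arcFn_continuousAt {a : ℝ} {y : AddCircle (1:ℝ)} (hy : y ≠ (a:ℝ)) :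
    ContinuousAt (arcFn a) y := by
  have h1 : ContinuousAt (fun y : AddCircle (1:ℝ) =>
      ((AddCircle.equivIco 1 a y : Ico a (a+1)) : ℝ)) y :=
    continuous_subtype_val.continuousAt.comp (AddCircle.continuousAt_equivIco 1 a hy)
  exact (continuous_projIcc.continuousAt).comp (h1.sub continuousAt_const)

/-- floor constancy along a continuous monotone map avoiding `a + ℤ`. -/
lemma floor_eq_floor {w : unitInterval → ℝ} (hwc : Continuous w) {a : ℝ}
    (hne : ∀ u : unitInterval, ((w u : ℝ) : AddCircle (1:ℝ)) ≠ (a:ℝ))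
    {s s' : unitInterval} (hss : s ≤ s') (hmono : w s ≤ w s') :
    ⌊w s - a⌋ = ⌊w s' - a⌋ := by
  have hint : ∀ (u : unitInterval) (k : ℤ), w u - a ≠ (k:ℝ) := by
    intro u k h
    exact hne u (coe_eq_coe_iff.mpr ⟨k, h⟩)
  by_contra hne'
  have hk : ⌊w s - a⌋ < ⌊w s' - a⌋ :=
    lt_of_le_of_ne (Int.floor_le_floor (by linarith)) hne'
  set k := ⌊w s - a⌋ with hkdef
  have h1 : w s - a < (k:ℝ) + 1 := Int.lt_floor_add_one _
  have h2 : ((k:ℝ) + 1) ≤ w s' - a := by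
    have : (k + 1 : ℤ) ≤ ⌊w s' - a⌋ := by omega
    calc ((k:ℝ)+1) = ((k+1 : ℤ) : ℝ) := by push_cast; ring
    _ ≤ w s' - a := le_trans (by exact_mod_cast Int.cast_le.mpr this) (Int.floor_le _)
  have hIcc : a + ((k:ℝ)+1) ∈
      Icc (w (projIcc 0 1 zero_le_one (s:ℝ))) (w (projIcc 0 1 zero_le_one (s':ℝ))) := by
    rw [projIcc_val, projIcc_val]
    exact ⟨by linarith, by linarith⟩
  have hss' : (s:ℝ) ≤ (s':ℝ) := hss
  obtain ⟨u, _, hu⟩ := intermediate_value_Icc hss'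
    ((hwc.comp (continuous_projIcc)).continuousOn) hIcc
  exact hint (projIcc 0 1 zero_le_one u) (k+1)
    (by rw [Function.comp] at hu; rw [hu]; push_cast; ring)

lemma arcFn_isDirectedFn (a : ℝ) :
    IsDirectedFn dCircle {((a : ℝ) : AddCircle (1:ℝ))}ᶜ (arcFn a) := by
  constructor
  · intro y hy
    exact (arcFn_continuousAt hy).continuousWithinAt
  · rintro p' ⟨w, hwc, hwm, hwe⟩ hrange s s' hss
    have hne : ∀ u : unitInterval, ((w u : ℝ) : AddCircle (1:ℝ)) ≠ (a:ℝ) := by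
      intro u h
      have := hrange (mem_range_self u)
      rw [hwe u] at this
      exact this h
    have hfl : ⌊w s - a⌋ = ⌊w s' - a⌋ := floor_eq_floor hwc hne hss (hwm hss)
    set k := ⌊w s - a⌋ with hkdef
    have key : ∀ u : unitInterval, ⌊w u - a⌋ = k →
        ((arcFn a (p' u) : unitInterval) : ℝ) = w u - k - a := by
      intro u hu
      have h1 : (k:ℝ) ≤ w u - a := by rw [← hu]; exact Int.floor_le _
      have h3 : w u - a ≠ (k:ℝ) := fun h => hne u (coe_eq_coe_iff.mpr ⟨k, h⟩)
      have h1' : (k:ℝ) < w u - a := h1.lt_of_ne (Ne.symm h3)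
      have h2 : w u - a < (k:ℝ) + 1 := by rw [← hu]; exact Int.lt_floor_add_one _
      have hmem : w u - (k:ℝ) ∈ Ioo a (a+1) := ⟨by linarith, by linarith⟩
      have hcoee : ((w u : ℝ) : AddCircle (1:ℝ)) = ((w u - (k:ℝ) : ℝ) : AddCircle (1:ℝ)) :=
        coe_eq_coe_iff.mpr ⟨k, by ring⟩
      rw [hwe u, hcoee, arcFn_coe hmem]
    have hks' : ⌊w s' - a⌋ = k := hfl.symm
    have hks : ⌊w s - a⌋ = k := rfl
    show arcFn a (p' s) ≤ arcFn a (p' s')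
    rw [← Subtype.coe_le_coe, key s hks, key s' hks']
    have := hwm hss
    linarith

/-- Directed paths are weakly directed. -/
lemma dCircle_subset_satPaths : dCircle ⊆ satPaths dCircle := by
  rintro p hp U hU c hc t ht
  obtain ⟨w, hwc, hwm, hwe⟩ := hp
  have hUopen : IsOpen (⇑p ⁻¹' U) := hU.preimage p.continuous
  obtain ⟨ε, hε, hball⟩ := Metric.isOpen_iff.mp hUopen t ht
  set α : unitInterval := ⟨max 0 ((t:ℝ) - ε/2), le_max_left _ _,
    max_le zero_le_one (by linarith [t.2.2, hε])⟩ with hαdef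
  set β : unitInterval := ⟨min 1 ((t:ℝ) + ε/2), le_min zero_le_one (by linarith [t.2.1, hε]),
    min_le_left _ _⟩ with hβdef
  have hαt : α ≤ t := by
    rw [← Subtype.coe_le_coe]
    exact max_le t.2.1 (by linarith)
  have htβ : t ≤ β := by
    rw [← Subtype.coe_le_coe]
    exact le_min t.2.2 (by linarith)
  have hIccball : Icc α β ⊆ Metric.ball t ε := by
    intro s hs
    have h1 : max 0 ((t:ℝ) - ε/2) ≤ (s:ℝ) := hs.1
    have h2 : (s:ℝ) ≤ min 1 ((t:ℝ) + ε/2) := hs.2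
    have h1' : (t:ℝ) - ε/2 ≤ s := le_trans (le_max_right _ _) h1
    have h2' : (s:ℝ) ≤ (t:ℝ) + ε/2 := le_trans h2 (min_le_right _ _)
    rw [Metric.mem_ball, Subtype.dist_eq, Real.dist_eq, abs_sub_lt_iff]
    constructor <;> linarith
  have hIccU : Icc α β ⊆ ⇑p ⁻¹' U := fun s hs => hball (hIccball hs)
  have hmem𝓝 : Icc α β ∈ 𝓝 t := by
    rw [Metric.mem_nhds_iff]
    refine ⟨ε/2, half_pos hε, ?_⟩
    intro s hs
    rw [Metric.mem_ball, Subtype.dist_eq, Real.dist_eq, abs_sub_lt_iff] at hs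
    constructor
    · rw [← Subtype.coe_le_coe]
      exact max_le s.2.1 (by linarith [hs.2])
    · rw [← Subtype.coe_le_coe]
      exact le_min s.2.2 (by linarith [hs.1])
  refine ⟨Icc α β, hmem𝓝, hIccU, ?_⟩
  rcases eq_or_lt_of_le (hαt.trans htβ) with heq | hαβ
  · intro x hx y hy hxy
    have hyx : y ≤ x := hy.2.trans (heq ▸ hx.1)
    rw [le_antisymm hxy hyx]
  · have hβα : (0:ℝ) < (β:ℝ) - (α:ℝ) := sub_pos.mpr hαβ
    have hmemφ : ∀ s : unitInterval, (α:ℝ) + (s:ℝ)*((β:ℝ)-(α:ℝ)) ∈ Icc (0:ℝ) 1 := by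
      intro s
      constructor
      · have := mul_nonneg s.2.1 hβα.le
        have := α.2.1
        linarith
      · have h1 : (s:ℝ)*((β:ℝ)-(α:ℝ)) ≤ (β:ℝ)-(α:ℝ) :=
          mul_le_of_le_one_left hβα.le s.2.2
        have := β.2.2
        linarith
    set φ : C(unitInterval, unitInterval) :=
      ⟨fun s => ⟨(α:ℝ) + (s:ℝ)*((β:ℝ)-(α:ℝ)), hmemφ s⟩,
        Continuous.subtype_mk
          (continuous_const.add (continuous_subtype_val.mul continuous_const)) _⟩ with hφdef
    have hφmono : Monotone ⇑φ := by
      intro u v huv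
      rw [← Subtype.coe_le_coe]
      have : (u:ℝ) ≤ (v:ℝ) := huv
      have := mul_le_mul_of_nonneg_right this hβα.le
      show (α:ℝ) + (u:ℝ)*((β:ℝ)-(α:ℝ)) ≤ (α:ℝ) + (v:ℝ)*((β:ℝ)-(α:ℝ))
      linarith
    have hφmem : ∀ s : unitInterval, φ s ∈ Icc α β := by
      intro s
      constructor
      · rw [← Subtype.coe_le_coe]
        show (α:ℝ) ≤ (α:ℝ) + (s:ℝ)*((β:ℝ)-(α:ℝ))
        have := mul_nonneg s.2.1 hβα.le
        linarith
      · rw [← Subtype.coe_le_coe]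
        show (α:ℝ) + (s:ℝ)*((β:ℝ)-(α:ℝ)) ≤ (β:ℝ)
        have := mul_le_of_le_one_left hβα.le s.2.2
        linarith
    have hr : p.comp φ ∈ dCircle := by
      refine ⟨w ∘ ⇑φ, hwc.comp φ.continuous, hwm.comp hφmono, fun u => ?_⟩
      exact hwe (φ u)
    have hrange : Set.range ⇑(p.comp φ) ⊆ U := by
      rintro _ ⟨u, rfl⟩
      exact hIccU (hφmem u)
    have hmono := hc.2 _ hr hrange
    intro x hx y hy hxy
    set sx : unitInterval := ⟨((x:ℝ)-(α:ℝ))/((β:ℝ)-(α:ℝ)),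
      div_nonneg (sub_nonneg.mpr hx.1) hβα.le,
      (div_le_one hβα).mpr (by have : (x:ℝ) ≤ (β:ℝ) := hx.2; linarith)⟩ with hsxdef
    set sy : unitInterval := ⟨((y:ℝ)-(α:ℝ))/((β:ℝ)-(α:ℝ)),
      div_nonneg (sub_nonneg.mpr hy.1) hβα.le,
      (div_le_one hβα).mpr (by have : (y:ℝ) ≤ (β:ℝ) := hy.2; linarith)⟩ with hsydef
    have hφx : φ sx = x := by
      apply Subtype.ext
      show (α:ℝ) + (((x:ℝ)-(α:ℝ))/((β:ℝ)-(α:ℝ)))*((β:ℝ)-(α:ℝ)) = (x:ℝ)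
      rw [div_mul_cancel₀ _ hβα.ne']
      ring
    have hφy : φ sy = y := by
      apply Subtype.ext
      show (α:ℝ) + (((y:ℝ)-(α:ℝ))/((β:ℝ)-(α:ℝ)))*((β:ℝ)-(α:ℝ)) = (y:ℝ)
      rw [div_mul_cancel₀ _ hβα.ne']
      ring
    have hsxy : sx ≤ sy := by
      rw [← Subtype.coe_le_coe]
      show ((x:ℝ)-(α:ℝ))/((β:ℝ)-(α:ℝ)) ≤ ((y:ℝ)-(α:ℝ))/((β:ℝ)-(α:ℝ))
      gcongr
    have := hmono hsxy
    simpa [Function.comp, hφx, hφy] using this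

/-- Local monotone continuous lifts for weakly directed paths. -/
lemma exists_local_lift {p : C(unitInterval, AddCircle (1:ℝ))}
    (hp : IsWeaklyDirected dCircle p) (t : unitInterval) :
    ∃ α β : unitInterval, α ≤ t ∧ t ≤ β ∧ Icc α β ∈ 𝓝 t ∧
      ∃ l : unitInterval → ℝ, Continuous l ∧ Monotone l ∧
        ∀ s ∈ Icc α β, p s = ((l s : ℝ) : AddCircle (1:ℝ)) := by
  set x₀ : ℝ := ((AddCircle.equivIco 1 0 (p t) : Ico (0:ℝ) (0+1)) : ℝ) with hx₀def
  have hx₀ : ((x₀ : ℝ) : AddCircle (1:ℝ)) = p t := coe_equivIco_val 0 (p t)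
  set a : ℝ := x₀ - 2⁻¹ with hadef
  have hpt : p t ≠ ((a : ℝ) : AddCircle (1:ℝ)) := by
    rw [← hx₀]
    exact ne_coe_of_mem_Ioo ⟨by simp only [hadef]; linarith, by simp only [hadef]; linarith⟩
  have hU : IsOpen ({((a : ℝ) : AddCircle (1:ℝ))}ᶜ) := isOpen_compl_singleton
  obtain ⟨V, hV𝓝, hVsub, hVmono⟩ :=
    hp _ hU (arcFn a) (arcFn_isDirectedFn a) t (by simpa using hpt)
  obtain ⟨ε, hε, hball⟩ := Metric.mem_nhds_iff.mp hV𝓝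
  set α : unitInterval := ⟨max 0 ((t:ℝ) - ε/2), le_max_left _ _,
    max_le zero_le_one (by linarith [t.2.2, hε])⟩ with hαdef
  set β : unitInterval := ⟨min 1 ((t:ℝ) + ε/2), le_min zero_le_one (by linarith [t.2.1, hε]),
    min_le_left _ _⟩ with hβdef
  have hαt : α ≤ t := by
    rw [← Subtype.coe_le_coe]
    exact max_le t.2.1 (by linarith)
  have htβ : t ≤ β := by
    rw [← Subtype.coe_le_coe]
    exact le_min t.2.2 (by linarith)
  have hαβ : α ≤ β := hαt.trans htβ
  have hIccV : Icc α β ⊆ V := by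
    intro s hs
    apply hball
    have h1 : max 0 ((t:ℝ) - ε/2) ≤ (s:ℝ) := hs.1
    have h2 : (s:ℝ) ≤ min 1 ((t:ℝ) + ε/2) := hs.2
    have h1' : (t:ℝ) - ε/2 ≤ s := le_trans (le_max_right _ _) h1
    have h2' : (s:ℝ) ≤ (t:ℝ) + ε/2 := le_trans h2 (min_le_right _ _)
    rw [Metric.mem_ball, Subtype.dist_eq, Real.dist_eq, abs_sub_lt_iff]
    constructor <;> linarith
  have hmem𝓝 : Icc α β ∈ 𝓝 t := by
    rw [Metric.mem_nhds_iff]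
    refine ⟨ε/2, half_pos hε, ?_⟩
    intro s hs
    rw [Metric.mem_ball, Subtype.dist_eq, Real.dist_eq, abs_sub_lt_iff] at hs
    constructor
    · rw [← Subtype.coe_le_coe]
      exact max_le s.2.1 (by linarith [hs.2])
    · rw [← Subtype.coe_le_coe]
      exact le_min s.2.2 (by linarith [hs.1])
  have hne : ∀ s : unitInterval, s ∈ Icc α β → p s ≠ ((a : ℝ) : AddCircle (1:ℝ)) := by
    intro s hs
    have := hVsub (hIccV hs)
    simpa using this
  -- the clamp map
  have hclampmem' : ∀ s : unitInterval, max (α:ℝ) (min (s:ℝ) (β:ℝ)) ∈ Icc (0:ℝ) 1 := by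
    intro s
    constructor
    · exact le_trans α.2.1 (le_max_left _ _)
    · exact max_le α.2.2 (le_trans (min_le_left _ _) s.2.2)
  set clamp : unitInterval → unitInterval :=
    fun s => ⟨max (α:ℝ) (min (s:ℝ) (β:ℝ)), hclampmem' s⟩ with hclampdef
  have hclampcont : Continuous clamp :=
    Continuous.subtype_mk (continuous_const.max (continuous_subtype_val.min continuous_const)) _
  have hclampmono : Monotone clamp := by
    intro u v huv
    rw [← Subtype.coe_le_coe]
    exact max_le_max le_rfl (min_le_min (Subtype.coe_le_coe.mpr huv) le_rfl)
  have hclampmem : ∀ s, clamp s ∈ Icc α β := by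
    intro s
    constructor
    · rw [← Subtype.coe_le_coe]; exact le_max_left _ _
    · rw [← Subtype.coe_le_coe]
      exact max_le hαβ (min_le_right _ _)
  have hclampid : ∀ s ∈ Icc α β, clamp s = s := by
    intro s hs
    apply Subtype.ext
    show max (α:ℝ) (min (s:ℝ) (β:ℝ)) = (s:ℝ)
    rw [min_eq_left (Subtype.coe_le_coe.mpr hs.2), max_eq_right (Subtype.coe_le_coe.mpr hs.1)]
  -- the local coordinate
  set z : unitInterval → ℝ :=
    fun u => ((AddCircle.equivIco 1 a (p u) : Ico a (a+1)) : ℝ) with hzdef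
  have hz_coe : ∀ u, ((z u : ℝ) : AddCircle (1:ℝ)) = p u := fun u => coe_equivIco_val a (p u)
  have hz_mem : ∀ u ∈ Icc α β, z u ∈ Ioo a (a+1) := by
    intro u hu
    have h1 : z u ∈ Ico a (a+1) := (AddCircle.equivIco 1 a (p u)).2
    refine ⟨lt_of_le_of_ne h1.1 ?_, h1.2⟩
    intro h
    exact hne u hu (by rw [← hz_coe u, ← h])
  have harc : ∀ u ∈ Icc α β, ((arcFn a (p u) : unitInterval) : ℝ) = z u - a := by
    intro u hu
    conv_lhs => rw [← hz_coe u]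
    exact arcFn_coe (hz_mem u hu)
  refine ⟨α, β, hαt, htβ, hmem𝓝, fun s => z (clamp s), ?_, ?_, ?_⟩
  · rw [continuous_iff_continuousAt]
    intro s
    have h1 : ContinuousAt (fun y : AddCircle (1:ℝ) =>
        ((AddCircle.equivIco 1 a y : Ico a (a+1)) : ℝ)) (p (clamp s)) :=
      continuous_subtype_val.continuousAt.comp
        (AddCircle.continuousAt_equivIco 1 a (hne _ (hclampmem s)))
    exact (h1.comp (p.continuous.continuousAt)).comp hclampcont.continuousAt
  · intro u v huv
    have h1 := hVmono (hIccV (hclampmem u)) (hIccV (hclampmem v)) (hclampmono huv)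
    have h2 : ((arcFn a (p (clamp u)) : unitInterval) : ℝ) ≤
        ((arcFn a (p (clamp v)) : unitInterval) : ℝ) := Subtype.coe_le_coe.mpr h1
    rw [harc _ (hclampmem u), harc _ (hclampmem v)] at h2
    linarith
  · intro s hs
    show p s = ((z (clamp s) : ℝ) : AddCircle (1:ℝ))
    rw [hclampid s hs, hz_coe s]

/-- Weakly directed paths are directed: glue local lifts. -/
lemma satPaths_subset_dCircle : satPaths dCircle ⊆ dCircle := by
  intro p hp
  haveI : Fact ((0:ℝ) ≤ 1) := ⟨zero_le_one⟩
  have hp' : IsWeaklyDirected dCircle p := hp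
  set A : Set unitInterval := {b | ∃ q : unitInterval → ℝ, Continuous q ∧ Monotone q ∧
    ∀ s, s ≤ b → p s = ((q s : ℝ) : AddCircle (1:ℝ))} with hAdef
  have hstep : ∀ b ∈ A, ∀ α β : unitInterval, α ≤ b → b ≤ β →
      ∀ l : unitInterval → ℝ, Continuous l → Monotone l →
      (∀ s ∈ Icc α β, p s = ((l s : ℝ) : AddCircle (1:ℝ))) → β ∈ A := by
    rintro b ⟨q₀, hq₀c, hq₀m, hq₀⟩ α β hαb hbβ l hlc hlm hl
    refine ⟨fun s => if (s:ℝ) ≤ (b:ℝ) then q₀ s else l s + (q₀ b - l b), ?_, ?_, ?_⟩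
    · refine Continuous.if_le hq₀c (hlc.add continuous_const)
        continuous_subtype_val continuous_const ?_
      intro s hs
      have hsb : s = b := Subtype.ext hs
      rw [hsb]; ring
    · intro u v huv
      by_cases hu : (u:ℝ) ≤ (b:ℝ) <;> by_cases hv : (v:ℝ) ≤ (b:ℝ)
      · simp only [if_pos hu, if_pos hv]; exact hq₀m huv
      · simp only [if_pos hu, if_neg hv]
        have hbv : (b:ℝ) ≤ (v:ℝ) := le_of_not_ge hv
        have h1 : q₀ u ≤ q₀ b := hq₀m (Subtype.coe_le_coe.mp hu)
        have h2 : l b ≤ l v := hlm (Subtype.coe_le_coe.mp hbv)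
        linarith
      · exact absurd (le_trans (Subtype.coe_le_coe.mpr huv) hv) hu
      · simp only [if_neg hu, if_neg hv]
        have := hlm huv
        linarith
    · intro s hs
      by_cases hsb : (s:ℝ) ≤ (b:ℝ)
      · simp only [if_pos hsb]; exact hq₀ s (Subtype.coe_le_coe.mp hsb)
      · simp only [if_neg hsb]
        have hbs : b ≤ s := Subtype.coe_le_coe.mp (le_of_not_ge hsb)
        have hsI : s ∈ Icc α β := ⟨hαb.trans hbs, hs⟩
        have h1 : p s = ((l s : ℝ) : AddCircle (1:ℝ)) := hl s hsI
        have h2 : p b = ((l b : ℝ) : AddCircle (1:ℝ)) := hl b ⟨hαb, hbβ⟩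
        have h3 : p b = ((q₀ b : ℝ) : AddCircle (1:ℝ)) := hq₀ b le_rfl
        have hqb : ((q₀ b : ℝ) : AddCircle (1:ℝ)) = ((l b : ℝ) : AddCircle (1:ℝ)) :=
          h3.symm.trans h2
        rw [h1, QuotientAddGroup.mk_add, QuotientAddGroup.mk_sub, hqb, sub_self, add_zero]
  have h0A : (0:unitInterval) ∈ A := by
    obtain ⟨α, β, hα0, h0β, _, l, hlc, hlm, hl⟩ := exists_local_lift hp' 0
    refine ⟨l, hlc, hlm, fun s hs => ?_⟩
    have hs0 : s = 0 := le_antisymm hs (by rw [← Subtype.coe_le_coe]; exact s.2.1)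
    rw [hs0]
    exact hl 0 ⟨hα0, h0β⟩
  set m := sSup A with hmdef
  obtain ⟨α, β, hαm, hmβ, hIcc𝓝, l, hlc, hlm, hl⟩ := exists_local_lift hp' m
  obtain ⟨ε, hε, hball⟩ := Metric.mem_nhds_iff.mp hIcc𝓝
  have hbex : ∃ b ∈ A, α ≤ b ∧ b ≤ m := by
    by_cases hα0 : α ≤ 0
    · exact ⟨0, h0A, hα0, by rw [← Subtype.coe_le_coe]; exact m.2.1⟩
    · have hαm' : α < m := by
        set μ : unitInterval := ⟨max 0 ((m:ℝ) - ε/2), le_max_left _ _,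
          max_le zero_le_one (by linarith [m.2.2])⟩ with hμdef
        have hμm : (μ:ℝ) ≤ (m:ℝ) := max_le m.2.1 (by linarith)
        have hμball : μ ∈ Metric.ball m ε := by
          rw [Metric.mem_ball, Subtype.dist_eq, Real.dist_eq, abs_sub_lt_iff]
          have : (m:ℝ) - ε/2 ≤ (μ:ℝ) := le_max_right _ _
          constructor <;> linarith
        have hμIcc := hball hμball
        have hαμ : (α:ℝ) ≤ μ := hμIcc.1
        rcases lt_or_ge (α:ℝ) (m:ℝ) with hlt | hge
        · exact Subtype.coe_lt_coe.mp hlt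
        · exfalso
          have h1 : (μ:ℝ) = (m:ℝ) := le_antisymm hμm (le_trans hge hαμ)
          have h2 : max 0 ((m:ℝ) - ε/2) = (m:ℝ) := h1
          have h3 : (m:ℝ) ≤ 0 := by
            rcases max_choice 0 ((m:ℝ) - ε/2) with hc | hc
            · rw [hc] at h2; linarith
            · rw [hc] at h2; linarith
          exact hα0 (by rw [← Subtype.coe_le_coe]
                        exact le_trans (Subtype.coe_le_coe.mpr hαm) h3)
      by_contra hno
      push_neg at hno
      have hub : m ≤ α := by
        apply sSup_le
        intro b hb
        by_contra hbα
        exact absurd (le_sSup hb) (not_le.mpr (hno b hb (not_le.mp hbα).le))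
      exact absurd hαm' (not_lt.mpr hub)
  obtain ⟨b, hbA, hαb, hbm⟩ := hbex
  have hβA : β ∈ A := hstep b hbA α β hαb (hbm.trans hmβ) l hlc hlm hl
  have hβm : β = m := le_antisymm (le_sSup hβA) hmβ
  have hm1 : m = 1 := by
    by_contra hm1
    have hmlt : (m:ℝ) < 1 := lt_of_le_of_ne m.2.2 (fun hh => hm1 (Subtype.ext hh))
    set ν : unitInterval := ⟨min 1 ((m:ℝ) + ε/2), le_min zero_le_one (by linarith [m.2.1]),
      min_le_left _ _⟩ with hνdef
    have hmν : (m:ℝ) ≤ (ν:ℝ) := le_min hmlt.le (by linarith)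
    have hνball : ν ∈ Metric.ball m ε := by
      rw [Metric.mem_ball, Subtype.dist_eq, Real.dist_eq, abs_sub_lt_iff]
      have : (ν:ℝ) ≤ (m:ℝ) + ε/2 := min_le_right _ _
      constructor <;> linarith
    have hνIcc := hball hνball
    have hνβ : (ν:ℝ) ≤ (β:ℝ) := hνIcc.2
    have hνgt : (m:ℝ) < (ν:ℝ) := lt_min hmlt (by linarith)
    have : (β:ℝ) = (m:ℝ) := by rw [hβm]
    linarith
  obtain ⟨q, hqc, hqm, hq⟩ : m ∈ A := hβm ▸ hβA
  refine ⟨q, hqc, hqm, fun s => hq s ?_⟩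
  rw [hm1, ← Subtype.coe_le_coe]
  exact s.2.2

lemma const_mem_dCircle (x : AddCircle (1:ℝ)) :
    ContinuousMap.const unitInterval x ∈ dCircle := by
  refine ⟨fun _ => ((AddCircle.equivIco 1 0 x : Ico (0:ℝ) (0+1)) : ℝ), continuous_const,
    monotone_const, fun t => ?_⟩
  rw [ContinuousMap.const_apply, coe_equivIco_val 0 x]

lemma reparam_mem_dCircle {p : C(unitInterval, AddCircle (1:ℝ))} (hp : p ∈ dCircle)
    (φ : C(unitInterval, unitInterval)) (hφ : Monotone ⇑φ) : p.comp φ ∈ dCircle := by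
  obtain ⟨w, hwc, hwm, hwe⟩ := hp
  exact ⟨w ∘ ⇑φ, hwc.comp φ.continuous, hwm.comp hφ, fun t => hwe (φ t)⟩

lemma concat_mem_dCircle {p q : C(unitInterval, AddCircle (1:ℝ))} (hp : p ∈ dCircle)
    (hq : q ∈ dCircle) (h : p 1 = q 0) : concatPath p q h ∈ dCircle := by
  obtain ⟨w1, hw1c, hw1m, hw1⟩ := hp
  obtain ⟨w2, hw2c, hw2m, hw2⟩ := hq
  have hσ1mem : ∀ t : unitInterval, min 1 (2*(t:ℝ)) ∈ Icc (0:ℝ) 1 :=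
    fun t => ⟨le_min zero_le_one (by linarith [t.2.1]), min_le_left _ _⟩
  have hσ2mem : ∀ t : unitInterval, max 0 (2*(t:ℝ)-1) ∈ Icc (0:ℝ) 1 :=
    fun t => ⟨le_max_left _ _, max_le zero_le_one (by linarith [t.2.2])⟩
  set σ1 : unitInterval → unitInterval := fun t => ⟨min 1 (2*(t:ℝ)), hσ1mem t⟩ with hσ1def
  set σ2 : unitInterval → unitInterval := fun t => ⟨max 0 (2*(t:ℝ)-1), hσ2mem t⟩ with hσ2def
  have hσ1c : Continuous σ1 := Continuous.subtype_mk
    (continuous_const.min (continuous_const.mul continuous_subtype_val)) _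
  have hσ2c : Continuous σ2 := Continuous.subtype_mk
    (continuous_const.max ((continuous_const.mul continuous_subtype_val).sub continuous_const)) _
  set k : ℝ := w1 1 - w2 0 with hkdef
  set Q : unitInterval → ℝ :=
    fun t => if (t:ℝ) ≤ 1/2 then w1 (σ1 t) else w2 (σ2 t) + k with hQdef
  have hbd : ∀ t : unitInterval, (t:ℝ) = 1/2 → w1 (σ1 t) = w2 (σ2 t) + k := by
    intro t ht
    have h1 : σ1 t = 1 := Subtype.ext (by show min 1 (2*(t:ℝ)) = 1; rw [ht]; norm_num)
    have h2 : σ2 t = 0 := Subtype.ext (by show max 0 (2*(t:ℝ)-1) = 0; rw [ht]; norm_num)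
    rw [h1, h2, hkdef]; ring
  have hσ1le : ∀ t, σ1 t ≤ 1 := by
    intro t; rw [← Subtype.coe_le_coe]
    show min 1 (2*(t:ℝ)) ≤ ((1 : unitInterval) : ℝ)
    exact min_le_left _ _
  have hσ2ge : ∀ t, (0:unitInterval) ≤ σ2 t := by
    intro t; rw [← Subtype.coe_le_coe]
    show ((0 : unitInterval) : ℝ) ≤ max 0 (2*(t:ℝ)-1)
    exact le_max_left _ _
  refine ⟨Q, ?_, ?_, ?_⟩
  · exact Continuous.if_le (hw1c.comp hσ1c) ((hw2c.comp hσ2c).add continuous_const)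
      continuous_subtype_val continuous_const hbd
  · intro u v huv
    have huv' : (u:ℝ) ≤ v := huv
    by_cases hu : (u:ℝ) ≤ 1/2 <;> by_cases hv : (v:ℝ) ≤ 1/2
    · simp only [hQdef, if_pos hu, if_pos hv]
      have hle : σ1 u ≤ σ1 v := by
        rw [← Subtype.coe_le_coe]
        exact min_le_min le_rfl (by linarith)
      exact hw1m hle
    · simp only [hQdef, if_pos hu, if_neg hv]
      have h1 : w1 (σ1 u) ≤ w1 1 := hw1m (hσ1le u)
      have h2 : w2 0 ≤ w2 (σ2 v) := hw2m (hσ2ge v)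
      rw [hkdef]
      linarith
    · exact absurd (le_trans huv' hv) hu
    · simp only [hQdef, if_neg hu, if_neg hv]
      have hle : σ2 u ≤ σ2 v := by
        rw [← Subtype.coe_le_coe]
        exact max_le_max le_rfl (by linarith : 2*(u:ℝ)-1 ≤ 2*(v:ℝ)-1)
      have := hw2m hle
      linarith
  · intro t
    show ((⟨p, rfl, rfl⟩ : Path (p 0) (p 1)).trans
      ((⟨q, rfl, rfl⟩ : Path (q 0) (q 1)).cast h rfl)) t = ((Q t : ℝ) : AddCircle (1:ℝ))
    rw [Path.trans_apply]
    by_cases ht : (t:ℝ) ≤ 1/2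
    · rw [dif_pos ht]
      have h1 : σ1 t = ⟨2*(t:ℝ), (mul_pos_mem_iff zero_lt_two).2 ⟨t.2.1, ht⟩⟩ :=
        Subtype.ext (min_eq_right (by linarith))
      have h2 : Q t = w1 (σ1 t) := if_pos ht
      rw [h2, h1]
      exact hw1 _
    · rw [dif_neg ht]
      have h1 : σ2 t = ⟨2*(t:ℝ)-1, two_mul_sub_one_mem_iff.2 ⟨(not_le.1 ht).le, t.2.2⟩⟩ :=
        Subtype.ext (max_eq_right (by linarith [not_le.mp ht]))
      have h2 : Q t = w2 (σ2 t) + k := if_neg ht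
      have h3 : (((⟨q, rfl, rfl⟩ : Path (q 0) (q 1)).cast h rfl) :
          unitInterval → AddCircle (1:ℝ)) = ⇑q := by
        rw [Path.cast_coe]
        rfl
      rw [h2, h1, QuotientAddGroup.mk_add, hkdef, QuotientAddGroup.mk_sub,
        ← hw1 1, ← hw2 0]
      show (((⟨q, rfl, rfl⟩ : Path (q 0) (q 1)).cast h rfl)) _ = _
      rw [show (((⟨q, rfl, rfl⟩ : Path (q 0) (q 1)).cast h rfl))
        ⟨2*(t:ℝ)-1, two_mul_sub_one_mem_iff.2 ⟨(not_le.1 ht).le, t.2.2⟩⟩ =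
        q ⟨2*(t:ℝ)-1, two_mul_sub_one_mem_iff.2 ⟨(not_le.1 ht).le, t.2.2⟩⟩ from
          congrFun h3 _]
      rw [h, sub_self, add_zero]
      exact hw2 _

end

end DCircleAux

/-- The directed circle `(ℝ/ℤ, dCircle)` is a d-space, and it is saturated. -/
theorem stmt_11 :
    (∀ x : AddCircle (1 : ℝ), ContinuousMap.const unitInterval x ∈ dCircle) ∧
    (∀ p ∈ dCircle, ∀ q ∈ dCircle, ∀ h : p 1 = q 0, concatPath p q h ∈ dCircle) ∧
    (∀ p ∈ dCircle, ∀ φ : C(unitInterval, unitInterval), Monotone ⇑φ →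
      p.comp φ ∈ dCircle) ∧
    IsSaturated dCircle := by
  refine ⟨DCircleAux.const_mem_dCircle,
    fun p hp q hq h => DCircleAux.concat_mem_dCircle hp hq h,
    fun p hp φ hφ => DCircleAux.reparam_mem_dCircle hp φ hφ, ?_⟩
  exact Set.Subset.antisymm DCircleAux.satPaths_subset_dCircle DCircleAux.dCircle_subset_satPaths
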